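/- There exists a function f : ℚ × ℚ → ℚ such that for all a, b, a', b' ∈ ℚ: f(a,b) < f(a',b') if and only if one of the following holds: (1) a ≤ 0 and a < a'; (2) a ≤ 0 and a = a' and b < b'; (3) a > 0 and a' > 0 and b < b'; (4) a > 0 and b = b' and a < a'. (That is, an ll-operation on ℚ exists.) -/

import Mathlib

noncomputable section

open Sum

/-- The target linear order: negative-or-zero part (lex on (a,b)) followed by the
positive part (lex on (b,a)). -/
abbrev LLType : Type := (↥(Set.Iic (0 : ℚ)) ×ₗ ℚ) ⊕ₗ (ℚ ×ₗ ↥(Set.Ioi (0 : ℚ)))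

theorem exists_ll_operation :
    ∃ f : ℚ → ℚ → ℚ, ∀ a b a' b' : ℚ,
      f a b < f a' b' ↔
        (a ≤ 0 ∧ a < a') ∨ (a ≤ 0 ∧ a = a' ∧ b < b') ∨
        (0 < a ∧ 0 < a' ∧ b < b') ∨ (0 < a ∧ b = b' ∧ a < a') := by
  have hcount : Countable LLType := by
    unfold LLType _root_.Lex; infer_instance
  have hne : Nonempty LLType := by
    unfold LLType _root_.Lex
    exact ⟨Sum.inl (⟨0, Set.mem_Iic.mpr le_rfl⟩, 0)⟩
  obtain ⟨e⟩ : Nonempty (LLType ≃o ℚ) := Order.iso_of_countable_dense LLType ℚ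
  set g : ℚ → ℚ → LLType := fun a b =>
    if h : a ≤ 0 then toLex (Sum.inl (toLex (⟨a, Set.mem_Iic.mpr h⟩, b)))
    else toLex (Sum.inr (toLex (b, ⟨a, Set.mem_Ioi.mpr (not_le.mp h)⟩))) with hg
  refine ⟨fun a b => e (g a b), fun a b a' b' => ?_⟩
  rw [e.lt_iff_lt]
  simp only [hg]
  by_cases ha : a ≤ 0 <;> by_cases ha' : a' ≤ 0
  · -- a ≤ 0, a' ≤ 0
    rw [dif_pos ha, dif_pos ha', Sum.Lex.inl_lt_inl_iff, Prod.Lex.lt_iff]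
    simp only [ofLex_toLex, Subtype.mk_lt_mk, Subtype.mk.injEq]
    constructor
    · rintro (h | ⟨h1, h2⟩)
      · exact Or.inl ⟨ha, h⟩
      · exact Or.inr (Or.inl ⟨ha, h1, h2⟩)
    · rintro (⟨_, h⟩ | ⟨_, h1, h2⟩ | ⟨h, _⟩ | ⟨h, _⟩)
      · exact Or.inl h
      · exact Or.inr ⟨h1, h2⟩
      · exact absurd h (not_lt.mpr ha)
      · exact absurd h (not_lt.mpr ha)
  · -- a ≤ 0, a' > 0
    have ha'' : 0 < a' := not_le.mp ha'
    rw [dif_pos ha, dif_neg ha']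
    refine iff_of_true (Sum.Lex.inl_lt_inr _ _) (Or.inl ⟨ha, ha.trans_lt ha''⟩)
  · -- a > 0, a' ≤ 0
    have ha'' : 0 < a := not_le.mp ha
    rw [dif_neg ha, dif_pos ha']
    refine iff_of_false Sum.Lex.not_inr_lt_inl ?_
    rintro (⟨h, _⟩ | ⟨h, _⟩ | ⟨_, h, _⟩ | ⟨_, _, h⟩)
    · exact absurd h (not_le.mpr ha'')
    · exact absurd h (not_le.mpr ha'')
    · exact absurd h (not_lt.mpr ha')
    · exact absurd h (not_lt.mpr (ha'.trans ha''.le))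
  · -- a > 0, a' > 0
    have h1 : 0 < a := not_le.mp ha
    have h2 : 0 < a' := not_le.mp ha'
    rw [dif_neg ha, dif_neg ha', Sum.Lex.inr_lt_inr_iff, Prod.Lex.lt_iff]
    simp only [ofLex_toLex, Subtype.mk_lt_mk, Subtype.mk.injEq]
    constructor
    · rintro (h | ⟨hb, hlt⟩)
      · exact Or.inr (Or.inr (Or.inl ⟨h1, h2, h⟩))
      · exact Or.inr (Or.inr (Or.inr ⟨h1, hb, hlt⟩))
    · rintro (⟨h, _⟩ | ⟨h, _⟩ | ⟨_, _, h⟩ | ⟨_, hb, hlt⟩)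
      · exact absurd h (not_le.mpr h1)
      · exact absurd h (not_le.mpr h1)
      · exact Or.inl h
      · exact Or.inr ⟨hb, hlt⟩

end
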